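/- Let n be a positive integer, let T_n denote the n-th Chebyshev polynomial of the first kind, and define P(z) = (1 − √(1−z²))/z for z ∈ (0,1]. Then for every z ∈ (0,1) one has T_n(1/z) ≥ 1, the value Q(z) = 1/T_n(1/z) lies in (0,1], and P(Q(z)) = P(z)ⁿ. -/

import Mathlib

open Polynomial Chebyshev in
lemma T_complex_cosh' (x : ℂ) (n : ℤ) :
    (T ℂ n).eval (Complex.cosh x) = Complex.cosh (n * x) := by
  rw [← Complex.cos_mul_I, Polynomial.Chebyshev.T_complex_cos, ← mul_assoc, Complex.cos_mul_I]

open Polynomial Chebyshev in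
lemma T_real_cosh' (x : ℝ) (n : ℤ) :
    (T ℝ n).eval (Real.cosh x) = Real.cosh (n * x) := mod_cast T_complex_cosh' x n

lemma exists_cosh_eq {x : ℝ} (hx : 1 ≤ x) : ∃ t : ℝ, 0 ≤ t ∧ Real.cosh t = x := by
  set s := Real.sqrt (x ^ 2 - 1) with hs
  have hs0 : 0 ≤ s := Real.sqrt_nonneg _
  have hx0 : 0 < x := lt_of_lt_of_le one_pos hx
  have hxs : 0 < x + s := by linarith
  have hs2 : s ^ 2 = x ^ 2 - 1 := Real.sq_sqrt (by nlinarith)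
  refine ⟨Real.log (x + s), Real.log_nonneg (by linarith), ?_⟩
  have he : Real.exp (Real.log (x + s)) = x + s := Real.exp_log hxs
  have hinv : Real.exp (-(Real.log (x + s))) = x - s := by
    rw [Real.exp_neg, he]
    rw [inv_eq_iff_eq_inv, eq_comm, inv_eq_iff_eq_inv, eq_comm]
    · field_simp
      nlinarith
  rw [Real.cosh_eq, he, hinv]
  ring

lemma Pval {t : ℝ} (ht : 0 ≤ t) :
    (1 - Real.sqrt (1 - (1 / Real.cosh t) ^ 2)) / (1 / Real.cosh t) = Real.exp (-t) := by
  have hc : 0 < Real.cosh t := Real.cosh_pos t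
  have hsh : 0 ≤ Real.sinh t := Real.sinh_nonneg_iff.mpr ht
  have h1 : 1 - (1 / Real.cosh t) ^ 2 = (Real.sinh t / Real.cosh t) ^ 2 := by
    have := Real.cosh_sq_sub_sinh_sq t
    field_simp
    nlinarith
  rw [h1, Real.sqrt_sq (by positivity), ← Real.cosh_sub_sinh]
  field_simp

open Polynomial Chebyshev in
/-- Discrete stability in the second sense with Chebyshev portlying operator:
for `P(z) = (1-√(1-z²))/z` and `Q(z) = 1/Tₙ(1/z)` one has `Tₙ(1/z) ≥ 1`,
`Q(z) ∈ (0,1]` and `P(Q(z)) = P(z)ⁿ`. -/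
theorem chebyshev_portlying_stability (n : ℕ) (hn : 0 < n)
    (z : ℝ) (hz : z ∈ Set.Ioo (0 : ℝ) 1) :
    1 ≤ (Polynomial.Chebyshev.T ℝ (n : ℤ)).eval (1 / z) ∧
    1 / (Polynomial.Chebyshev.T ℝ (n : ℤ)).eval (1 / z) ∈ Set.Ioc (0 : ℝ) 1 ∧
    (1 - Real.sqrt (1 - (1 / (Polynomial.Chebyshev.T ℝ (n : ℤ)).eval (1 / z)) ^ 2)) /
        (1 / (Polynomial.Chebyshev.T ℝ (n : ℤ)).eval (1 / z))
      = ((1 - Real.sqrt (1 - z ^ 2)) / z) ^ n := by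
  obtain ⟨hz0, hz1⟩ := hz
  have hx : (1 : ℝ) ≤ 1 / z := by
    rw [le_div_iff₀ hz0]; linarith
  obtain ⟨t, ht0, hct⟩ := exists_cosh_eq hx
  have hzc : z = 1 / Real.cosh t := by
    rw [hct]; field_simp
  have hT : (Polynomial.Chebyshev.T ℝ (n : ℤ)).eval (1 / z) = Real.cosh ((n : ℝ) * t) := by
    rw [← hct, T_real_cosh']; norm_num
  have hnt : (0 : ℝ) ≤ (n : ℝ) * t := by positivity
  have h1 : 1 ≤ Real.cosh ((n : ℝ) * t) := Real.one_le_cosh _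
  refine ⟨hT ▸ h1, ⟨?_, ?_⟩, ?_⟩
  · rw [hT]; positivity
  · rw [hT, div_le_one (by positivity)]; exact h1
  · rw [hT, Pval hnt, hzc, Pval ht0, ← Real.exp_nat_mul]
    ring_nf
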